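/- Let G̃ be a group such that H₁(G̃) ≅ ℤ, H₂(G̃) is finite, and G̃ contains a nontrivial finite subgroup (equivalently, a nontrivial torsion element). Then G̃ is not circularly orderable. (In particular, the universal central extension of a virtual knot group with nontrivial finite second homology is not circularly orderable.) -/

import Mathlib

universe u

/-- A group is circularly orderable if it admits a left-invariant circular order cocycle. -/
def IsCircularlyOrderable (G : Type u) [Group G] : Prop :=
  ∃ c : G → G → G → ℤ,
    (∀ g₁ g₂ g₃ : G, c g₁ g₂ g₃ = -1 ∨ c g₁ g₂ g₃ = 0 ∨ c g₁ g₂ g₃ = 1) ∧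
    (∀ g₁ g₂ g₃ : G, c g₁ g₂ g₃ = 0 ↔ g₁ = g₂ ∨ g₁ = g₃ ∨ g₂ = g₃) ∧
    (∀ g₁ g₂ g₃ g₄ : G, c g₂ g₃ g₄ - c g₁ g₃ g₄ + c g₁ g₂ g₄ - c g₁ g₂ g₃ = 0) ∧
    (∀ h g₁ g₂ g₃ : G, c g₁ g₂ g₃ = c (h * g₁) (h * g₂) (h * g₃))

/-- The kernel of the canonical presentation `FreeGroup G → G`. -/
def presKernel (G : Type u) [Group G] : Subgroup (FreeGroup G) :=
  (FreeGroup.lift (id : G → G)).ker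

instance (G : Type u) [Group G] : (presKernel G).Normal :=
  MonoidHom.normal_ker _

/-- The second homology group `H₂(G; ℤ)` computed via Hopf's formula:
`H₂(G) = (R ⊓ [F, F]) / [F, R]` for the canonical free presentation `G = F/R`,
`F = FreeGroup G`. -/
def H2 (G : Type u) [Group G] : Type u :=
  ↥(presKernel G ⊓ commutator (FreeGroup G)) ⧸
    ((⁅(⊤ : Subgroup (FreeGroup G)), presKernel G⁆).subgroupOf
      (presKernel G ⊓ commutator (FreeGroup G)))

noncomputable instance (G : Type u) [Group G] : Group (H2 G) := by
  unfold H2; infer_instance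

/-- Bundled circular order data on a group. -/
structure CircStr (G : Type u) [Group G] where
  c : G → G → G → ℤ
  hval : ∀ g₁ g₂ g₃ : G, c g₁ g₂ g₃ = -1 ∨ c g₁ g₂ g₃ = 0 ∨ c g₁ g₂ g₃ = 1
  hzero : ∀ g₁ g₂ g₃ : G, c g₁ g₂ g₃ = 0 ↔ g₁ = g₂ ∨ g₁ = g₃ ∨ g₂ = g₃
  hcoc : ∀ g₁ g₂ g₃ g₄ : G, c g₂ g₃ g₄ - c g₁ g₃ g₄ + c g₁ g₂ g₄ - c g₁ g₂ g₃ = 0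
  hinv : ∀ h g₁ g₂ g₃ : G, c g₁ g₂ g₃ = c (h * g₁) (h * g₂) (h * g₃)

namespace CircStr

variable {G : Type u} [Group G] (d : CircStr G)

lemma c12 (x y : G) : d.c x x y = 0 := (d.hzero _ _ _).mpr (Or.inl rfl)
lemma c13 (x y : G) : d.c x y x = 0 := (d.hzero _ _ _).mpr (Or.inr (Or.inl rfl))
lemma c23 (x y : G) : d.c x y y = 0 := (d.hzero _ _ _).mpr (Or.inr (Or.inr rfl))

lemma c_ne_zero {x y z : G} (h1 : x ≠ y) (h2 : x ≠ z) (h3 : y ≠ z) : d.c x y z ≠ 0 := by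
  intro h; rcases (d.hzero x y z).mp h with h | h | h <;> tauto

lemma c_swap23 (x y z : G) : d.c x z y = - d.c x y z := by
  have h := d.hcoc x y z y
  have h1 := d.c13 y z
  have h2 := d.c23 x y
  omega

/-- The linear order on `G` obtained by cutting the circular order at `1`. -/
def L (g h : G) : Prop := d.c 1 g h = 1 ∨ (g = 1 ∧ h ≠ 1)

lemma L_irrefl (g : G) : ¬ d.L g g := by
  rintro (h | ⟨h1, h2⟩)
  · rw [d.c23] at h; omega
  · exact h2 h1

lemma not_L_one (g : G) : ¬ d.L g 1 := by
  rintro (h | ⟨h1, h2⟩)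
  · rw [d.c13] at h; omega
  · exact h2 rfl

lemma L_one_iff (g : G) : d.L 1 g ↔ g ≠ 1 := by
  constructor
  · rintro (h | ⟨h1, h2⟩)
    · intro hg; subst hg; rw [d.c13] at h; omega
    · exact h2
  · intro hg; exact Or.inr ⟨rfl, hg⟩

lemma L_ne {g h : G} (hL : d.L g h) : g ≠ h := by
  rintro rfl; exact d.L_irrefl g hL

lemma L_of_ne_one {g h : G} (hg : g ≠ 1) (hL : d.L g h) : d.c 1 g h = 1 := by
  rcases hL with h1 | ⟨h1, _⟩
  · exact h1
  · exact absurd h1 hg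

lemma L_asymm {g h : G} (h1 : d.L g h) (h2 : d.L h g) : False := by
  rcases h1 with ha | ⟨ha, ha'⟩
  · rcases h2 with hb | ⟨hb, hb'⟩
    · have := d.c_swap23 1 g h; omega
    · subst hb; rw [d.c13] at ha; omega
  · subst ha; exact d.not_L_one h h2

lemma L_trichot {g h : G} (hne : g ≠ h) : d.L g h ∨ d.L h g := by
  by_cases hg : g = 1
  · subst hg; exact Or.inl ((d.L_one_iff h).mpr (Ne.symm hne))
  · by_cases hh : h = 1
    · subst hh; exact Or.inr ((d.L_one_iff g).mpr hg)
    · have h0 : d.c 1 g h ≠ 0 := d.c_ne_zero (Ne.symm hg) (Ne.symm hh) hne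
      rcases d.hval 1 g h with hv | hv | hv
      · right; left; have := d.c_swap23 1 g h; omega
      · omega
      · left; left; exact hv

lemma L_trans {g h k : G} (h1 : d.L g h) (h2 : d.L h k) : d.L g k := by
  by_cases hg : g = 1
  · subst hg
    refine (d.L_one_iff k).mpr ?_
    rintro rfl; exact d.not_L_one h h2
  · have hgh : d.c 1 g h = 1 := d.L_of_ne_one hg h1
    have hh : h ≠ 1 := by rintro rfl; rw [d.c13] at hgh; omega
    have hhk : d.c 1 h k = 1 := d.L_of_ne_one hh h2
    have hk : k ≠ 1 := by rintro rfl; rw [d.c13] at hhk; omega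
    have hgk : g ≠ k := by
      rintro rfl
      have := d.c_swap23 1 g h; omega
    have hq := d.hcoc 1 g h k
    have hb1 := d.hval g h k
    have hb2 := d.hval 1 g k
    left; omega

/-- cut lemma (i): if `c a x y = 1` and `a ⪯ x`, `a ⪯ y` (in the cut order), then `x ≺ y`. -/
lemma cut_i {a x y : G} (h1 : d.c a x y = 1) (h2 : ¬ d.L x a) (h3 : ¬ d.L y a) :
    d.L x y := by
  have hax : a ≠ x := by rintro rfl; rw [d.c12] at h1; omega
  have hay : a ≠ y := by rintro rfl; rw [d.c13] at h1; omega
  have hxy : x ≠ y := by rintro rfl; rw [d.c23] at h1; omega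
  have hLax : d.L a x := (d.L_trichot hax).resolve_right h2
  have hLay : d.L a y := (d.L_trichot hay).resolve_right h3
  have hq := d.hcoc 1 a x y
  by_cases ha : a = 1
  · subst ha
    rw [d.c12, d.c12] at hq
    left; omega
  · have hx1 : x ≠ 1 := by rintro rfl; exact d.not_L_one a hLax
    have hy1 : y ≠ 1 := by rintro rfl; exact d.not_L_one a hLay
    have hax' : d.c 1 a x = 1 := d.L_of_ne_one ha hLax
    have hay' : d.c 1 a y = 1 := d.L_of_ne_one ha hLay
    left; omega

/-- cut lemma (ii): if `c a x y = 1` and `x ≺ a`, `y ≺ a`, then `x ≺ y`. -/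
lemma cut_ii {a x y : G} (h1 : d.c a x y = 1) (h2 : d.L x a) (h3 : d.L y a) :
    d.L x y := by
  have hxy : x ≠ y := by rintro rfl; rw [d.c23] at h1; omega
  have ha1 : a ≠ 1 := by rintro rfl; exact d.not_L_one x h2
  have hq := d.hcoc 1 a x y
  by_cases hx1 : x = 1
  · subst hx1; exact (d.L_one_iff y).mpr (Ne.symm hxy)
  · have hxa : d.c 1 x a = 1 := d.L_of_ne_one hx1 h2
    have hax : d.c 1 a x = -1 := by have := d.c_swap23 1 x a; omega
    by_cases hy1 : y = 1
    · subst hy1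
      have e1 := d.c13 1 x
      have e2 := d.c13 1 a
      omega
    · have hya : d.c 1 y a = 1 := d.L_of_ne_one hy1 h3
      have hay : d.c 1 a y = -1 := by have := d.c_swap23 1 y a; omega
      left; omega

/-- cut lemma (iii): `c a x y = 1`, `x ≺ a ⪯ y` is impossible. -/
lemma cut_iii {a x y : G} (h1 : d.c a x y = 1) (h2 : d.L x a) (h3 : ¬ d.L y a) :
    False := by
  have hay : a ≠ y := by rintro rfl; rw [d.c13] at h1; omega
  have ha1 : a ≠ 1 := by rintro rfl; exact d.not_L_one x h2
  have hLay : d.L a y := (d.L_trichot hay).resolve_right h3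
  have hy1 : y ≠ 1 := by rintro rfl; exact d.not_L_one a hLay
  have hay' : d.c 1 a y = 1 := d.L_of_ne_one ha1 hLay
  have hq := d.hcoc 1 a x y
  by_cases hx1 : x = 1
  · subst hx1
    have e1 := d.c12 1 y
    have e2 := d.c13 1 a
    omega
  · have hxa : d.c 1 x a = 1 := d.L_of_ne_one hx1 h2
    have hax : d.c 1 a x = -1 := by have := d.c_swap23 1 x a; omega
    have := d.hval 1 x y
    omega

/-! ### The linearly ordered set `G × ℤ` and monotone lifts -/

/-- The linear (strict) order on `G × ℤ` unrolling the circular order. -/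
def Lt (x y : G × ℤ) : Prop := x.2 < y.2 ∨ (x.2 = y.2 ∧ d.L x.1 y.1)

lemma Lt_irrefl (x : G × ℤ) : ¬ d.Lt x x := by
  rintro (h | ⟨-, h⟩)
  · omega
  · exact d.L_irrefl _ h

lemma Lt_trans {x y z : G × ℤ} (h1 : d.Lt x y) (h2 : d.Lt y z) : d.Lt x z := by
  rcases h1 with h1 | ⟨e1, l1⟩ <;> rcases h2 with h2 | ⟨e2, l2⟩
  · left; omega
  · left; omega
  · left; omega
  · exact Or.inr ⟨e1.trans e2, d.L_trans l1 l2⟩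

lemma Lt_asymm {x y : G × ℤ} (h1 : d.Lt x y) (h2 : d.Lt y x) : False :=
  d.Lt_irrefl x (d.Lt_trans h1 h2)

lemma Lt_trichot {x y : G × ℤ} (hne : x ≠ y) : d.Lt x y ∨ d.Lt y x := by
  rcases lt_trichotomy x.2 y.2 with h | h | h
  · exact Or.inl (Or.inl h)
  · have : x.1 ≠ y.1 := by
      intro h1; exact hne (Prod.ext h1 h)
    rcases d.L_trichot this with hL | hL
    · exact Or.inl (Or.inr ⟨h, hL⟩)
    · exact Or.inr (Or.inr ⟨h.symm, hL⟩)
  · exact Or.inr (Or.inl h)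

/-- The wrap-around cocycle value. -/
noncomputable def f (k g : G) : ℤ :=
  letI := Classical.propDecidable (d.L (k * g) k)
  if d.L (k * g) k then 1 else 0

lemma f_cases (k g : G) :
    (d.f k g = 1 ∧ d.L (k * g) k) ∨ (d.f k g = 0 ∧ ¬ d.L (k * g) k) := by
  unfold f
  split
  · exact Or.inl ⟨rfl, by assumption⟩
  · exact Or.inr ⟨rfl, by assumption⟩

lemma f_one_right (k : G) : d.f k 1 = 0 := by
  rcases d.f_cases k 1 with ⟨h1, h2⟩ | ⟨h1, h2⟩
  · rw [mul_one] at h2; exact absurd h2 (d.L_irrefl k)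
  · exact h1

lemma f_one_left (g : G) : d.f 1 g = 0 := by
  rcases d.f_cases 1 g with ⟨h1, h2⟩ | ⟨h1, h2⟩
  · rw [one_mul] at h2; exact absurd h2 (d.not_L_one g)
  · exact h1

/-- The monotone lift of left multiplication by `k`. -/
noncomputable def T (k : G) : Equiv.Perm (G × ℤ) where
  toFun x := (k * x.1, x.2 + d.f k x.1)
  invFun x := (k⁻¹ * x.1, x.2 - d.f k (k⁻¹ * x.1))
  left_inv x := by
    obtain ⟨g, m⟩ := x
    simp [inv_mul_cancel_left]
  right_inv x := by
    obtain ⟨g, m⟩ := x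
    simp [mul_inv_cancel_left]

lemma T_apply (k : G) (x : G × ℤ) : d.T k x = (k * x.1, x.2 + d.f k x.1) := rfl

/-- `T k` is strictly monotone. -/
lemma T_mono (k : G) {x y : G × ℤ} (hxy : d.Lt x y) : d.Lt (d.T k x) (d.T k y) := by
  obtain ⟨g, m⟩ := x
  obtain ⟨h, n⟩ := y
  rcases d.f_cases k g with ⟨hfg, hLg⟩ | ⟨hfg, hLg⟩ <;>
    rcases d.f_cases k h with ⟨hfh, hLh⟩ | ⟨hfh, hLh⟩ <;>
    rcases hxy with hmn | ⟨heq, hL⟩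
  -- fg = 1, fh = 1
  · left; simp only [T_apply, hfg, hfh]; omega
  · -- m = n, L g h, both wrap
    have hg1 : g ≠ 1 := by
      rintro rfl; rw [mul_one] at hLg; exact d.L_irrefl k hLg
    have hh1 : h ≠ 1 := by rintro rfl; exact d.not_L_one g hL
    have hD : d.c k (k * g) (k * h) = 1 := by
      have := d.hinv k 1 g h
      rw [mul_one] at this
      rw [← this]
      exact d.L_of_ne_one hg1 hL
    right
    refine ⟨by simp only [T_apply, hfg, hfh]; omega, ?_⟩
    exact d.cut_ii hD hLg hLh
  -- fg = 1, fh = 0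
  · -- m < n
    simp only [Lt, T_apply, hfg, hfh]
    by_cases hc : m + 1 < n
    · left; omega
    · have hn : n = m + 1 := by omega
      right
      refine ⟨by omega, ?_⟩
      by_cases hh1 : h = 1
      · subst hh1; rw [mul_one]; exact hLg
      · have hne : k * h ≠ k := by
          intro hk; exact hh1 (by rwa [mul_eq_left] at hk)
        have : d.L k (k * h) := (d.L_trichot (Ne.symm hne)).resolve_right hLh
        exact d.L_trans hLg this
  · -- m = n, L g h, fg = 1, fh = 0 : impossible
    exfalso
    have hg1 : g ≠ 1 := by
      rintro rfl; rw [mul_one] at hLg; exact d.L_irrefl k hLg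
    have hh1 : h ≠ 1 := by rintro rfl; exact d.not_L_one g hL
    have hD : d.c k (k * g) (k * h) = 1 := by
      have := d.hinv k 1 g h
      rw [mul_one] at this
      rw [← this]
      exact d.L_of_ne_one hg1 hL
    exact d.cut_iii hD hLg hLh
  -- fg = 0, fh = 1
  · left; simp only [T_apply, hfg, hfh]; omega
  · left; simp only [T_apply, hfg, hfh]; omega
  -- fg = 0, fh = 0
  · left; simp only [T_apply, hfg, hfh]; omega
  · -- m = n, L g h, no wraps
    by_cases hg1 : g = 1
    · subst hg1
      have hh1 : h ≠ 1 := by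
        intro hh; exact d.L_irrefl 1 (hh ▸ hL)
      have hne : k * h ≠ k * 1 := by
        intro hk; exact hh1 (mul_left_cancel hk)
      have : d.L (k * 1) (k * h) := by
        rcases d.L_trichot hne with h' | h'
        · rw [mul_one] at h'
          exact absurd h' hLh
        · exact h'
      exact Or.inr ⟨by simp only [T_apply, hfg, hfh]; omega, this⟩
    · have hh1 : h ≠ 1 := by rintro rfl; exact d.not_L_one g hL
      have hD : d.c k (k * g) (k * h) = 1 := by
        have := d.hinv k 1 g h
        rw [mul_one] at this
        rw [← this]
        exact d.L_of_ne_one hg1 hL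
      exact Or.inr ⟨by simp only [T_apply, hfg, hfh]; omega, d.cut_i hD hLg hLh⟩

/-- The shift map. -/
def sft : Equiv.Perm (G × ℤ) where
  toFun x := (x.1, x.2 + 1)
  invFun x := (x.1, x.2 - 1)
  left_inv x := by simp
  right_inv x := by simp

/-- The group of monotone shift-equivariant permutations of `G × ℤ`. -/
noncomputable def M : Subgroup (Equiv.Perm (G × ℤ)) where
  carrier := {φ | (∀ x y, d.Lt x y → d.Lt (φ x) (φ y)) ∧
    ∀ x, φ ((sft : Equiv.Perm (G × ℤ)) x) = (sft : Equiv.Perm (G × ℤ)) (φ x)}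
  one_mem' := ⟨fun x y h => h, fun x => rfl⟩
  mul_mem' := by
    rintro φ ρ ⟨hφ1, hφ2⟩ ⟨hρ1, hρ2⟩
    refine ⟨fun x y h => hφ1 _ _ (hρ1 _ _ h), fun x => ?_⟩
    simp only [Equiv.Perm.mul_apply, hρ2, hφ2]
  inv_mem' := by
    rintro φ ⟨hφ1, hφ2⟩
    constructor
    · intro x y h
      rcases eq_or_ne (φ⁻¹ x) (φ⁻¹ y) with he | hne
      · exfalso
        have : x = y := by
          have := congrArg φ he
          simpa using this
        subst this; exact d.Lt_irrefl _ h
      · rcases d.Lt_trichot hne with h' | h'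
        · exact h'
        · exfalso
          have := hφ1 _ _ h'
          simp only [Equiv.Perm.inv_def, Equiv.apply_symm_apply] at this
          exact d.Lt_asymm h this
    · intro x
      have h2 := hφ2 (φ⁻¹ x)
      apply φ.injective
      rw [show ∀ y, φ (φ⁻¹ y) = y from φ.apply_symm_apply, h2,
        show ∀ y, φ (φ⁻¹ y) = y from φ.apply_symm_apply]

lemma sft_mem : (sft : Equiv.Perm (G × ℤ)) ∈ d.M := by
  constructor
  · rintro x y (h | ⟨h1, h2⟩)
    · left; simpa [sft] using by omega
    · right; exact ⟨by simp [sft]; omega, h2⟩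
  · intro x; rfl

lemma T_mem (k : G) : d.T k ∈ d.M := by
  refine ⟨fun x y h => d.T_mono k h, fun x => ?_⟩
  obtain ⟨g, m⟩ := x
  simp only [T_apply, sft]
  show (k * g, (m + 1) + d.f k g) = (k * g, (m + d.f k g) + 1)
  rw [Prod.mk.injEq]
  exact ⟨rfl, by ring⟩

/-- The shift as element of `M`. -/
noncomputable def s : d.M := ⟨sft, d.sft_mem⟩

/-- The lift as element of `M`. -/
noncomputable def Tm (k : G) : d.M := ⟨d.T k, d.T_mem k⟩

lemma mem_mono {φ : d.M} {x y : G × ℤ} (h : d.Lt x y) :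
    d.Lt ((φ : Equiv.Perm (G × ℤ)) x) ((φ : Equiv.Perm (G × ℤ)) y) :=
  φ.2.1 x y h

lemma mem_equi (φ : d.M) (x : G × ℤ) :
    (φ : Equiv.Perm (G × ℤ)) ((sft : Equiv.Perm (G × ℤ)) x)
      = (sft : Equiv.Perm (G × ℤ)) ((φ : Equiv.Perm (G × ℤ)) x) :=
  φ.2.2 x

lemma s_comm (φ : d.M) : Commute d.s φ := by
  apply Subtype.ext
  apply Equiv.ext
  intro x
  show ((d.s : Equiv.Perm (G × ℤ)) * φ) x = (φ * (d.s : Equiv.Perm (G × ℤ))) x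
  simp only [Equiv.Perm.mul_apply]
  exact (d.mem_equi φ x).symm

lemma s_zpow_comm (m : ℤ) (φ : d.M) : d.s ^ m * φ = φ * d.s ^ m :=
  ((d.s_comm φ).zpow_left m).eq

lemma s_zpow_apply (m : ℤ) (x : G × ℤ) :
    ((d.s ^ m : d.M) : Equiv.Perm (G × ℤ)) x = (x.1, x.2 + m) := by
  induction m using Int.induction_on generalizing x with
  | zero => simp
  | succ n ih =>
    have : (d.s ^ ((n : ℤ) + 1) : d.M) = d.s ^ (n : ℤ) * d.s := by
      rw [zpow_add, zpow_one]
    rw [this]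
    show ((d.s ^ (n:ℤ) : d.M) : Equiv.Perm (G × ℤ)) (((d.s : d.M) : Equiv.Perm (G × ℤ)) x) = _
    rw [show ((d.s : d.M) : Equiv.Perm (G × ℤ)) x = (x.1, x.2 + 1) from rfl, ih]
    rw [Prod.mk.injEq]
    exact ⟨rfl, by push_cast; ring⟩
  | pred n ih =>
    have : (d.s ^ (-(n : ℤ) - 1) : d.M) = d.s ^ (-(n : ℤ)) * d.s⁻¹ := by
      rw [zpow_sub, zpow_one]
    rw [this]
    show ((d.s ^ (-(n:ℤ)) : d.M) : Equiv.Perm (G × ℤ)) (((d.s⁻¹ : d.M) : Equiv.Perm (G × ℤ)) x) = _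
    rw [show ((d.s⁻¹ : d.M) : Equiv.Perm (G × ℤ)) x = (x.1, x.2 - 1) from rfl, ih]
    rw [Prod.mk.injEq]
    exact ⟨rfl, by push_cast; ring⟩

lemma mem_snd_shift (φ : d.M) (g : G) (m : ℤ) :
    (φ : Equiv.Perm (G × ℤ)) (g, m + 1)
      = (((φ : Equiv.Perm (G × ℤ)) (g, m)).1, ((φ : Equiv.Perm (G × ℤ)) (g, m)).2 + 1) :=
  d.mem_equi φ (g, m)

/-- uniqueness of monotone equivariant lifts with given projection and base value -/
lemma lift_unique (φ φ' : d.M)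
    (h1 : ∀ x : G × ℤ, ((φ : Equiv.Perm (G × ℤ)) x).1 = ((φ' : Equiv.Perm (G × ℤ)) x).1)
    (h2 : (φ : Equiv.Perm (G × ℤ)) (1, 0) = (φ' : Equiv.Perm (G × ℤ)) (1, 0)) :
    φ = φ' := by
  have base : ∀ m : ℤ, (φ : Equiv.Perm (G × ℤ)) (1, m) = (φ' : Equiv.Perm (G × ℤ)) (1, m) := by
    intro m
    induction m using Int.induction_on with
    | zero => exact h2
    | succ n ih => rw [d.mem_snd_shift φ, d.mem_snd_shift φ', ih]
    | pred n ih =>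
      have e1 := d.mem_snd_shift φ 1 (-(n:ℤ) - 1)
      have e2 := d.mem_snd_shift φ' 1 (-(n:ℤ) - 1)
      rw [show (-(n : ℤ) - 1 + 1) = -(n:ℤ) from by ring] at e1 e2
      have key := e1.symm.trans (ih.trans e2)
      have k1 := congrArg Prod.fst key
      have k2 := congrArg Prod.snd key
      simp only at k1 k2
      exact Prod.ext k1 (by omega)
  apply Subtype.ext
  apply Equiv.ext
  rintro ⟨g, m⟩
  by_cases hg : g = 1
  · subst hg; exact base m
  · set u := (φ : Equiv.Perm (G × ℤ)) (1, m) with hu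
    have hu' : (φ' : Equiv.Perm (G × ℤ)) (1, m) = u := (base m).symm
    set v := (φ : Equiv.Perm (G × ℤ)) (g, m) with hv
    set v' := (φ' : Equiv.Perm (G × ℤ)) (g, m) with hv'
    have hfst : v.1 = v'.1 := h1 (g, m)
    have A1 : d.Lt ((1 : G), m) (g, m) := Or.inr ⟨rfl, (d.L_one_iff g).mpr hg⟩
    have A2 : d.Lt (g, m) ((1 : G), m + 1) := Or.inl (by omega)
    have B1 : d.Lt u v := d.mem_mono A1
    have B2 : d.Lt v (u.1, u.2 + 1) := by
      have := d.mem_mono (φ := φ) A2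
      rwa [d.mem_snd_shift φ 1 m, ← hu] at this
    have B1' : d.Lt u v' := hu' ▸ d.mem_mono (φ := φ') A1
    have B2' : d.Lt v' (u.1, u.2 + 1) := by
      have := d.mem_mono (φ := φ') A2
      rwa [d.mem_snd_shift φ' 1 m, hu'] at this
    -- analyze
    have case1 : (v.2 = u.2 ∧ d.L u.1 v.1) ∨ (v.2 = u.2 + 1 ∧ d.L v.1 u.1) := by
      rcases B1 with h | ⟨he, hl⟩ <;> rcases B2 with h' | ⟨he', hl'⟩
      · omega
      · exact Or.inr ⟨he', hl'⟩
      · exact Or.inl ⟨he.symm, hl⟩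
      · omega
    have case2 : (v'.2 = u.2 ∧ d.L u.1 v'.1) ∨ (v'.2 = u.2 + 1 ∧ d.L v'.1 u.1) := by
      rcases B1' with h | ⟨he, hl⟩ <;> rcases B2' with h' | ⟨he', hl'⟩
      · omega
      · exact Or.inr ⟨he', hl'⟩
      · exact Or.inl ⟨he.symm, hl⟩
      · omega
    have hsnd : v.2 = v'.2 := by
      rcases case1 with ⟨e, l⟩ | ⟨e, l⟩ <;> rcases case2 with ⟨e', l'⟩ | ⟨e', l'⟩
      · omega
      · exact absurd (d.L_asymm l (hfst ▸ l')) id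
      · exact absurd (d.L_asymm l' (hfst ▸ l)) id
      · omega
    exact Prod.ext hfst hsnd

lemma Tm_one : d.Tm (1 : G) = 1 := by
  apply Subtype.ext
  apply Equiv.ext
  rintro ⟨g, m⟩
  show ((1 : G) * g, m + d.f 1 g) = (g, m)
  rw [d.f_one_left, one_mul, add_zero]

lemma Tm_mul (g h : G) : d.Tm g * d.Tm h = d.s ^ (d.f g h) * d.Tm (g * h) := by
  apply d.lift_unique
  · intro x
    show ((d.T g) ((d.T h) x)).1
        = (((d.s ^ d.f g h : d.M) : Equiv.Perm (G × ℤ)) ((d.T (g * h)) x)).1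
    rw [d.s_zpow_apply]
    simp only [T_apply]
    exact (mul_assoc g h x.1).symm
  · show (d.T g) ((d.T h) (1, 0))
        = ((d.s ^ d.f g h : d.M) : Equiv.Perm (G × ℤ)) ((d.T (g * h)) (1, 0))
    rw [d.s_zpow_apply]
    simp [T_apply, d.f_one_right]

/-! ### Torsion-freeness of `M` -/

lemma lt_pow {ρ : d.M} {x : G × ℤ} (h : d.Lt x ((ρ : Equiv.Perm (G × ℤ)) x)) (k : ℕ) :
    d.Lt x (((ρ ^ (k + 1) : d.M) : Equiv.Perm (G × ℤ)) x) := by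
  induction k with
  | zero => simpa using h
  | succ k ih =>
    have e : ((ρ ^ (k + 1 + 1) : d.M) : Equiv.Perm (G × ℤ)) x
        = (ρ : Equiv.Perm (G × ℤ)) (((ρ ^ (k + 1) : d.M) : Equiv.Perm (G × ℤ)) x) := by
      rw [pow_succ']
      rfl
    rw [e]
    exact d.Lt_trans h (d.mem_mono ih)

lemma M_torsionfree (φ : d.M) (n : ℕ) (hn : 0 < n) (h : φ ^ n = 1) : φ = 1 := by
  by_contra hne
  have hex : ∃ x, (φ : Equiv.Perm (G × ℤ)) x ≠ x := by
    by_contra hall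
    push_neg at hall
    exact hne (Subtype.ext (Equiv.ext hall))
  obtain ⟨x, hx⟩ := hex
  obtain ⟨k, rfl⟩ : ∃ k, n = k + 1 := ⟨n - 1, by omega⟩
  rcases d.Lt_trichot hx with hlt | hlt
  · have hinvlt : d.Lt x (((φ⁻¹ : d.M) : Equiv.Perm (G × ℤ)) x) := by
      have h2 := d.mem_mono (φ := φ⁻¹) hlt
      have e : ((φ⁻¹ : d.M) : Equiv.Perm (G × ℤ)) ((φ : Equiv.Perm (G × ℤ)) x) = x := by
        show ((φ⁻¹ * φ : d.M) : Equiv.Perm (G × ℤ)) x = x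
        rw [inv_mul_cancel]; rfl
      rwa [e] at h2
    have h3 := d.lt_pow hinvlt k
    rw [inv_pow, h, inv_one] at h3
    exact d.Lt_irrefl x h3
  · have h3 := d.lt_pow hlt k
    rw [h] at h3
    exact d.Lt_irrefl x h3

/-! ### The lift homomorphism from the free group -/

/-- The canonical lift of the `T`-generators to `M`. -/
noncomputable def psi : FreeGroup G →* d.M := FreeGroup.lift d.Tm

lemma keyform (w : FreeGroup G) :
    ∃ m : ℤ, d.psi w = d.s ^ m * d.Tm (FreeGroup.lift (id : G → G) w) := by
  induction w using FreeGroup.induction_on with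
  | C1 => exact ⟨0, by simp [d.Tm_one]⟩
  | of x => exact ⟨0, by
      simp [psi]⟩
  | inv_of x _ =>
    refine ⟨-(d.f x⁻¹ x), ?_⟩
    have hmul := d.Tm_mul x⁻¹ x
    rw [inv_mul_cancel, d.Tm_one, mul_one] at hmul
    rw [map_inv, map_inv]
    simp only [psi, FreeGroup.lift_apply_of, id_eq]
    rw [zpow_neg, ← hmul, mul_inv_rev]
    simp [mul_assoc]
  | mul u v ihu ihv =>
    obtain ⟨m1, hm1⟩ := ihu
    obtain ⟨m2, hm2⟩ := ihv
    set a := FreeGroup.lift (id : G → G) u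
    set b := FreeGroup.lift (id : G → G) v
    refine ⟨m1 + m2 + d.f a b, ?_⟩
    rw [map_mul, map_mul, hm1, hm2]
    have step : d.s ^ m1 * d.Tm a * (d.s ^ m2 * d.Tm b)
        = d.s ^ m1 * d.s ^ m2 * (d.Tm a * d.Tm b) := by
      rw [mul_assoc, ← mul_assoc (d.Tm a), ← d.s_zpow_comm m2, mul_assoc, ← mul_assoc,
        ← mul_assoc]
    rw [step, d.Tm_mul, ← zpow_add, ← mul_assoc, ← zpow_add]

end CircStr

/-- A group with `H₁ ≅ ℤ`, finite `H₂` and a nontrivial torsion element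
is not circularly orderable. (In particular, the universal central extension of a virtual
knot group with nontrivial finite second homology is not circularly orderable.) -/
theorem not_circularlyOrderable_of_torsion
    (Gt : Type u) [Group Gt]
    (hH1 : Nonempty (Additive (Abelianization Gt) ≃+ ℤ))
    (hH2 : Finite (H2 Gt))
    (htor : ∃ a : Gt, a ≠ 1 ∧ IsOfFinOrder a) :
    ¬ IsCircularlyOrderable Gt := by
  rintro ⟨c, hval, hzero, hcoc, hinv⟩
  obtain ⟨e⟩ := hH1
  obtain ⟨a, ha1, hafin⟩ := htor
  obtain ⟨n, hn, han⟩ := isOfFinOrder_iff_pow_eq_one.mp hafin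
  set d : CircStr Gt := ⟨c, hval, hzero, hcoc, hinv⟩ with hd
  -- Step 1: `a` lies in the commutator subgroup, since `H₁ ≅ ℤ` is torsion-free.
  have hab : Abelianization.of a = 1 := by
    have h1 : (Abelianization.of a) ^ n = 1 := by rw [← map_pow, han, map_one]
    have h3 : (n • Additive.ofMul (Abelianization.of a))
        = (0 : Additive (Abelianization Gt)) := by
      rw [← ofMul_pow, h1]; rfl
    have h4 : e (n • Additive.ofMul (Abelianization.of a)) = 0 := by rw [h3, map_zero]
    rw [map_nsmul, nsmul_eq_mul] at h4
    have h5 : e (Additive.ofMul (Abelianization.of a)) = 0 := by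
      have hnz : ((n : ℤ)) ≠ 0 := by exact_mod_cast hn.ne'
      exact (mul_eq_zero.mp h4).resolve_left hnz
    have h6 : Additive.ofMul (Abelianization.of a) = 0 := by
      apply e.injective; rw [h5, map_zero]
    exact ofMul_eq_zero.mp h6
  have hacomm : a ∈ commutator Gt := by
    have h7 : (QuotientGroup.mk a : Gt ⧸ commutator Gt) = 1 := hab
    exact (QuotientGroup.eq_one_iff a).mp h7
  -- Step 2: lift `a` to an element of the commutator subgroup of the free group.
  have hpsurj : Function.Surjective (FreeGroup.lift (id : Gt → Gt)) := fun g =>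
    ⟨FreeGroup.of g, by simp⟩
  have hcomm_map : Subgroup.map (FreeGroup.lift (id : Gt → Gt))
      (commutator (FreeGroup Gt)) = commutator Gt := by
    rw [commutator_def, commutator_def, Subgroup.map_commutator,
      Subgroup.map_top_of_surjective _ hpsurj]
  obtain ⟨w, hwmem, hwp⟩ : ∃ w ∈ commutator (FreeGroup Gt),
      FreeGroup.lift (id : Gt → Gt) w = a := by
    have h8 : a ∈ Subgroup.map (FreeGroup.lift (id : Gt → Gt))
        (commutator (FreeGroup Gt)) := hcomm_map ▸ hacomm
    simpa [Subgroup.mem_map] using h8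
  have hwn_ker : w ^ n ∈ presKernel Gt := by
    show w ^ n ∈ (FreeGroup.lift (id : Gt → Gt)).ker
    rw [MonoidHom.mem_ker, map_pow, hwp, han]
  -- Step 3: use finiteness of H₂ (Hopf formula) to kill the `s`-exponent of `ψ (w^n)`.
  set K : Subgroup (FreeGroup Gt) := presKernel Gt ⊓ commutator (FreeGroup Gt) with hK
  set N : Subgroup K := (⁅(⊤ : Subgroup (FreeGroup Gt)), presKernel Gt⁆).subgroupOf K with hN
  haveI hfin : Finite (K ⧸ N) := hH2
  set y : K := ⟨w ^ n, hwn_ker, pow_mem hwmem n⟩ with hy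
  have hyfin : IsOfFinOrder (QuotientGroup.mk' N y) := isOfFinOrder_of_finite _
  obtain ⟨n2, hn2, hyn2⟩ := isOfFinOrder_iff_pow_eq_one.mp hyfin
  have hynN : y ^ n2 ∈ N := by
    rw [← QuotientGroup.ker_mk' N, MonoidHom.mem_ker, map_pow]
    exact hyn2
  have hynmem : ((y ^ n2 : K) : FreeGroup Gt)
      ∈ ⁅(⊤ : Subgroup (FreeGroup Gt)), presKernel Gt⁆ :=
    Subgroup.mem_subgroupOf.mp hynN
  -- ψ kills [F, R]
  have hle : ⁅(⊤ : Subgroup (FreeGroup Gt)), presKernel Gt⁆ ≤ d.psi.ker := by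
    rw [Subgroup.commutator_le]
    intro g1 _ g2 hg2
    rw [MonoidHom.mem_ker, map_commutatorElement]
    obtain ⟨m, hm⟩ := d.keyform g2
    have hg2one : FreeGroup.lift (id : Gt → Gt) g2 = 1 := MonoidHom.mem_ker.mp hg2
    rw [hg2one, CircStr.Tm_one, mul_one] at hm
    rw [hm]
    exact commutatorElement_eq_one_iff_commute.mpr ((d.s_comm (d.psi g1)).symm.zpow_right m)
  have hpsiyn : d.psi ((y ^ n2 : K) : FreeGroup Gt) = 1 := hle hynmem
  have hcoe : ((y ^ n2 : K) : FreeGroup Gt) = (w ^ n) ^ n2 := rfl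
  obtain ⟨m, hm⟩ := d.keyform (w ^ n)
  have hwn1 : FreeGroup.lift (id : Gt → Gt) (w ^ n) = 1 := MonoidHom.mem_ker.mp hwn_ker
  rw [hwn1, CircStr.Tm_one, mul_one] at hm
  have hsm : (d.s ^ m) ^ n2 = 1 := by
    rw [← hm, ← map_pow, ← hcoe, hpsiyn]
  have hm0 : m = 0 := by
    have h7 : d.s ^ (m * (n2 : ℤ)) = 1 := by rw [zpow_mul, zpow_natCast, hsm]
    have h8 := congrArg
      (fun φ : d.M => ((φ : Equiv.Perm (Gt × ℤ)) ((1 : Gt), (0 : ℤ))).2) h7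
    simp only [CircStr.s_zpow_apply] at h8
    have h9 : (0 : ℤ) + m * (n2 : ℤ) = 0 := by
      simpa using h8
    have hnz : ((n2 : ℤ)) ≠ 0 := by exact_mod_cast hn2.ne'
    have := mul_eq_zero.mp (by omega : m * (n2 : ℤ) = 0)
    exact this.resolve_right hnz
  rw [hm0, zpow_zero] at hm
  -- Step 4: `ψ w` is torsion in the torsion-free group `M`, hence trivial, hence `a = 1`.
  have hphiw : (d.psi w) ^ n = 1 := by rw [← map_pow, hm]
  have hpsiw1 : d.psi w = 1 := d.M_torsionfree _ n hn hphiw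
  obtain ⟨m', hm'⟩ := d.keyform w
  rw [hwp, hpsiw1] at hm'
  have hTa : d.Tm a = (d.s ^ m')⁻¹ := (inv_eq_of_mul_eq_one_right hm'.symm).symm
  have h10 := congrArg
    (fun φ : d.M => (((φ : Equiv.Perm (Gt × ℤ)) ((1 : Gt), (0 : ℤ))).1)) hTa
  rw [show ((d.s ^ m')⁻¹ : d.M) = d.s ^ (-m') from by rw [zpow_neg]] at h10
  simp only [CircStr.s_zpow_apply] at h10
  have h11 : a * 1 = 1 := h10
  rw [mul_one] at h11
  exact ha1 h11
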